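/- Weighted Hardy inequality at the origin: let a < 1/2 and let f be locally absolutely continuous on (0,∞) with ∫₀^∞ |f'(r)|² r^{2a} dr < ∞. Then f extends continuously to r = 0 and (a - 1/2)² ∫₀^∞ |f(r) - f(0)|² r^{2a-2} dr ≤ ∫₀^∞ |f'(r)|² r^{2a} dr. -/

import Mathlib

open MeasureTheory Set Filter Topology

/-- Weighted Hardy inequality at the origin, case `a < 1/2`: if `f` is locally absolutely
continuous on `(0,∞)` with `∫₀^∞ |f'(r)|² r^(2a) dr < ∞`, then `f` has a boundary value
`L = f(0)` at the origin and
`(a - 1/2)² ∫₀^∞ |f(r) - f(0)|² r^(2a-2) dr ≤ ∫₀^∞ |f'(r)|² r^(2a) dr`. -/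
theorem stmt_3 (f f' : ℝ → ℂ) (a : ℝ) (ha : a < 1/2)
    (hloc : ∀ s ∈ Ioi (0:ℝ), ∀ t ∈ Ioi (0:ℝ), IntervalIntegrable f' volume s t)
    (hFTC : ∀ s ∈ Ioi (0:ℝ), ∀ t ∈ Ioi (0:ℝ), f t - f s = ∫ r in s..t, f' r)
    (hint : ∫⁻ r in Ioi (0:ℝ), ENNReal.ofReal (‖f' r‖^2 * r ^ (2*a)) < ⊤) :
    ∃ L : ℂ, Tendsto f (𝓝[>] (0:ℝ)) (𝓝 L) ∧
      ENNReal.ofReal ((a - 1/2)^2) *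
          ∫⁻ r in Ioi (0:ℝ), ENNReal.ofReal (‖f r - L‖^2 * r ^ (2*a - 2))
        ≤ ∫⁻ r in Ioi (0:ℝ), ENNReal.ofReal (‖f' r‖^2 * r ^ (2*a)) := by
  set κ : ℝ := 1/2 - a with hκdef
  have hκ : 0 < κ := by rw [hκdef]; linarith
  set w : ℝ → ENNReal := fun u => ENNReal.ofReal (‖f' u‖^2 * u ^ (2*a)) with hwdef
  set g : ℝ → ENNReal := fun u => ENNReal.ofReal (‖f' u‖^2 * u ^ (a + 1/2)) with hgdef
  set B : ℝ → ENNReal := fun t => ∫⁻ u in Ioc 0 t, g u with hBdef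
  -- Key Cauchy–Schwarz estimate
  have key1 : ∀ s t : ℝ, 0 < s → s ≤ t →
      ENNReal.ofReal (‖f t - f s‖^2) ≤ (∫⁻ u in Ioc s t, g u) * ENNReal.ofReal (t ^ κ / κ) := by
    intro s t hs hst
    have ht : (0:ℝ) < t := lt_of_lt_of_le hs hst
    have hii : IntegrableOn (fun u => ‖f' u‖) (Ioc s t) := (hloc s hs t ht).1.norm
    have h1 : ENNReal.ofReal ‖f t - f s‖ ≤ ∫⁻ u in Ioc s t, ENNReal.ofReal ‖f' u‖ := by
      rw [← ofReal_integral_eq_lintegral_ofReal hii (ae_of_all _ fun u => norm_nonneg _)]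
      apply ENNReal.ofReal_le_ofReal
      rw [hFTC s hs t ht, ← intervalIntegral.integral_of_le hst]
      exact intervalIntegral.norm_integral_le_integral_norm hst
    set b : ℝ := a/2 + 1/4 with hbdef
    have h2b : b * 2 = a + 1/2 := by rw [hbdef]; ring
    set F : ℝ → ENNReal := fun u => ENNReal.ofReal (‖f' u‖ * u ^ b) with hFd
    set G : ℝ → ENNReal := fun u => ENNReal.ofReal (u ^ (-b)) with hGd
    have hFm : AEMeasurable F (volume.restrict (Ioc s t)) :=
      ((hloc s hs t ht).1.aestronglyMeasurable.norm.aemeasurable.mul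
        (measurable_id.pow_const b).aemeasurable).ennreal_ofReal
    have hGm : AEMeasurable G (volume.restrict (Ioc s t)) :=
      ((measurable_id.pow_const (-b)).ennreal_ofReal).aemeasurable
    have hpq : Real.HolderConjugate 2 2 := Real.holderConjugate_iff.2 ⟨one_lt_two, by norm_num⟩
    have hcs := ENNReal.lintegral_mul_le_Lp_mul_Lq (volume.restrict (Ioc s t)) hpq hFm hGm
    have hFG : ∫⁻ u in Ioc s t, (F * G) u = ∫⁻ u in Ioc s t, ENNReal.ofReal ‖f' u‖ := by
      refine setLIntegral_congr_fun measurableSet_Ioc (fun u hu => ?_)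
      have hu0 : (0:ℝ) < u := hs.trans hu.1
      simp only [Pi.mul_apply, hFd, hGd]
      rw [← ENNReal.ofReal_mul (mul_nonneg (norm_nonneg _) (Real.rpow_nonneg hu0.le _)),
        mul_assoc, ← Real.rpow_add hu0]
      simp
    have hF2 : ∫⁻ u in Ioc s t, F u ^ (2:ℝ) = ∫⁻ u in Ioc s t, g u := by
      refine setLIntegral_congr_fun measurableSet_Ioc (fun u hu => ?_)
      have hu0 : (0:ℝ) < u := hs.trans hu.1
      rw [hFd, ENNReal.ofReal_rpow_of_nonneg
        (mul_nonneg (norm_nonneg _) (Real.rpow_nonneg hu0.le _)) (by norm_num), hgdef]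
      congr 1
      rw [Real.mul_rpow (norm_nonneg _) (Real.rpow_nonneg hu0.le _), ← Real.rpow_mul hu0.le,
        h2b, show ((2:ℝ) = ((2:ℕ):ℝ)) by norm_num, Real.rpow_natCast]
    have hG2 : ∫⁻ u in Ioc s t, G u ^ (2:ℝ) ≤ ENNReal.ofReal (t ^ κ / κ) := by
      have heq : ∫⁻ u in Ioc s t, G u ^ (2:ℝ)
          = ∫⁻ u in Ioc s t, ENNReal.ofReal (u ^ (-(a + 1/2))) := by
        refine setLIntegral_congr_fun measurableSet_Ioc (fun u hu => ?_)
        have hu0 : (0:ℝ) < u := hs.trans hu.1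
        rw [hGd, ENNReal.ofReal_rpow_of_nonneg (Real.rpow_nonneg hu0.le _) (by norm_num),
          ← Real.rpow_mul hu0.le, show (-b) * 2 = -(a + 1/2) by rw [← h2b]; ring]
      rw [heq]
      have hintg : IntervalIntegrable (fun u : ℝ => u ^ (-(a + 1/2))) volume s t :=
        intervalIntegral.intervalIntegrable_rpow' (by linarith)
      rw [← ofReal_integral_eq_lintegral_ofReal hintg.1
        ((ae_restrict_iff' measurableSet_Ioc).2
          (ae_of_all _ fun u hu => Real.rpow_nonneg (hs.trans hu.1).le _))]
      apply ENNReal.ofReal_le_ofReal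
      rw [← intervalIntegral.integral_of_le hst, integral_rpow (Or.inl (by linarith)),
        show -(a + 1/2) + 1 = κ by rw [hκdef]; ring]
      gcongr
      exact sub_le_self _ (Real.rpow_nonneg hs.le _)
    calc ENNReal.ofReal (‖f t - f s‖^2)
        = (ENNReal.ofReal ‖f t - f s‖) ^ 2 := by
          rw [← ENNReal.ofReal_pow (norm_nonneg _)]
      _ ≤ (∫⁻ u in Ioc s t, (F * G) u) ^ 2 := by rw [hFG]; exact pow_le_pow_left' h1 2
      _ ≤ ((∫⁻ u in Ioc s t, F u ^ (2:ℝ)) ^ (1/(2:ℝ))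
            * (∫⁻ u in Ioc s t, G u ^ (2:ℝ)) ^ (1/(2:ℝ))) ^ 2 := pow_le_pow_left' hcs 2
      _ = (∫⁻ u in Ioc s t, F u ^ (2:ℝ)) * (∫⁻ u in Ioc s t, G u ^ (2:ℝ)) := by
          rw [mul_pow, ← ENNReal.rpow_natCast (_ ^ (1/(2:ℝ))) 2,
            ← ENNReal.rpow_natCast ((∫⁻ u in Ioc s t, G u ^ (2:ℝ)) ^ (1/(2:ℝ))) 2,
            ← ENNReal.rpow_mul, ← ENNReal.rpow_mul]
          norm_num
      _ ≤ (∫⁻ u in Ioc s t, g u) * ENNReal.ofReal (t ^ κ / κ) := by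
          rw [hF2]; exact mul_le_mul_right hG2 _
  -- Finiteness of B
  have hBfin : ∀ r : ℝ, 0 < r → B r < ⊤ := by
    intro r hr
    have hpt : ∀ u ∈ Ioc (0:ℝ) r, g u ≤ ENNReal.ofReal (r ^ κ) * w u := by
      intro u hu
      have hu0 : (0:ℝ) < u := hu.1
      show ENNReal.ofReal (‖f' u‖^2 * u ^ (a + 1/2))
        ≤ ENNReal.ofReal (r ^ κ) * ENNReal.ofReal (‖f' u‖^2 * u ^ (2*a))
      have hsplit : ‖f' u‖^2 * u ^ (a + 1/2) = u ^ κ * (‖f' u‖^2 * u ^ (2*a)) := by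
        rw [show a + 1/2 = κ + 2*a by rw [hκdef]; ring, Real.rpow_add hu0]; ring
      rw [hsplit, ENNReal.ofReal_mul (Real.rpow_nonneg hu0.le _)]
      exact mul_le_mul_left (ENNReal.ofReal_le_ofReal
        (Real.rpow_le_rpow hu0.le hu.2 hκ.le)) _
    have hb : B r ≤ ENNReal.ofReal (r ^ κ) * ∫⁻ u in Ioi 0, w u := by
      calc B r ≤ ∫⁻ u in Ioc 0 r, ENNReal.ofReal (r ^ κ) * w u :=
            lintegral_mono_ae ((ae_restrict_iff' measurableSet_Ioc).2 (ae_of_all _ hpt))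
        _ = ENNReal.ofReal (r ^ κ) * ∫⁻ u in Ioc 0 r, w u :=
            lintegral_const_mul' _ _ ENNReal.ofReal_ne_top
        _ ≤ ENNReal.ofReal (r ^ κ) * ∫⁻ u in Ioi 0, w u :=
            mul_le_mul_right (lintegral_mono_set Ioc_subset_Ioi_self) _
    exact lt_of_le_of_lt hb (ENNReal.mul_lt_top ENNReal.ofReal_lt_top hint)
  -- Smallness of the tail
  have htail : ∀ ε : ENNReal, ε ≠ 0 → ∃ δ : ℝ, 0 < δ ∧ δ ≤ 1 ∧
      ∀ t : ℝ, 0 < t → t ≤ δ → B t ≤ ε := by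
    intro ε hε
    have h1 : ∫⁻ u, g u ∂(volume.restrict (Ioc (0:ℝ) 1)) ≠ ⊤ := (hBfin 1 one_pos).ne
    obtain ⟨δ, hδ0, hδ⟩ := exists_pos_setLIntegral_lt_of_measure_lt h1 hε
    obtain ⟨ρ, hρ0, hρpos', hρδ⟩ := ENNReal.lt_iff_exists_real_btwn.1 hδ0
    have hρpos : 0 < ρ := ENNReal.ofReal_pos.1 hρpos'
    refine ⟨min ρ 1, lt_min hρpos one_pos, min_le_right _ _, fun t ht htδ => ?_⟩
    have ht1 : t ≤ 1 := le_trans htδ (min_le_right _ _)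
    have hmeas : (volume.restrict (Ioc (0:ℝ) 1)) (Ioc 0 t) < δ := by
      refine lt_of_le_of_lt (le_trans (Measure.restrict_le_self _) ?_) hρδ
      rw [Real.volume_Ioc, sub_zero]
      exact ENNReal.ofReal_le_ofReal (le_trans htδ (min_le_left _ _))
    have := hδ (Ioc 0 t) hmeas
    rw [Measure.restrict_restrict measurableSet_Ioc,
      inter_eq_left.2 (Ioc_subset_Ioc_right ht1)] at this
    exact this.le
  -- Existence of the limit
  obtain ⟨L, hL⟩ : ∃ L : ℂ, Tendsto f (𝓝[>] (0:ℝ)) (𝓝 L) := by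
    have hC : Cauchy (Filter.map f (𝓝[>] (0:ℝ))) := by
      refine Metric.cauchy_iff.2 ⟨Filter.map_neBot, fun ε hε => ?_⟩
      obtain ⟨δ, hδ0, hδ1, hδ⟩ := htail (ENNReal.ofReal (κ * (ε/2)^2))
        (ENNReal.ofReal_pos.2 (by positivity)).ne'
      refine ⟨f '' Ioo 0 δ, image_mem_map (Ioo_mem_nhdsGT_of_mem ⟨le_refl 0, hδ0⟩), ?_⟩
      have key : ∀ p q : ℝ, p ∈ Ioo (0:ℝ) δ → q ∈ Ioo (0:ℝ) δ → p ≤ q →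
          dist (f p) (f q) < ε := by
        intro p q hp hq hpq
        have hq1 : q ≤ 1 := le_trans hq.2.le hδ1
        have h2 : ENNReal.ofReal (‖f q - f p‖^2)
            ≤ ENNReal.ofReal (κ * (ε/2)^2) * ENNReal.ofReal (1 / κ) := by
          refine le_trans (key1 p q hp.1 hpq) ?_
          have hB : (∫⁻ u in Ioc p q, g u) ≤ ENNReal.ofReal (κ * (ε/2)^2) :=
            le_trans (lintegral_mono_set (Ioc_subset_Ioc_left hp.1.le))
              (hδ q hq.1 hq.2.le)
          refine mul_le_mul' hB (ENNReal.ofReal_le_ofReal ?_)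
          gcongr
          exact Real.rpow_le_one (hp.1.trans_le hpq).le hq1 hκ.le
        rw [← ENNReal.ofReal_mul (by positivity)] at h2
        have h3 : ‖f q - f p‖^2 ≤ κ * (ε/2)^2 * (1 / κ) :=
          (ENNReal.ofReal_le_ofReal_iff (by positivity)).1 h2
        have h4 : κ * (ε/2)^2 * (1 / κ) = (ε/2)^2 := by field_simp
        rw [h4] at h3
        have h5 : ‖f q - f p‖ ≤ ε/2 :=
          (pow_le_pow_iff_left₀ (norm_nonneg _) (by positivity) two_ne_zero).1 h3
        rw [dist_eq_norm, ← norm_neg]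
        simpa [neg_sub] using lt_of_le_of_lt h5 (half_lt_self hε)
      rintro x ⟨u, hu, rfl⟩ y ⟨v, hv, rfl⟩
      rcases le_total u v with h | h
      · exact key u v hu hv h
      · rw [dist_comm]; exact key v u hv hu h
    obtain ⟨L, hL⟩ := CompleteSpace.complete hC
    exact ⟨L, hL⟩
  -- Pointwise bound for ‖f r - L‖
  have key4 : ∀ r : ℝ, 0 < r →
      ENNReal.ofReal (‖f r - L‖^2) ≤ B r * ENNReal.ofReal (r ^ κ / κ) := by
    intro r hr
    have hne : B r * ENNReal.ofReal (r ^ κ / κ) ≠ ⊤ :=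
      ENNReal.mul_ne_top (hBfin r hr).ne ENNReal.ofReal_ne_top
    rw [ENNReal.ofReal_le_iff_le_toReal hne]
    have hbound : ∀ s ∈ Ioc (0:ℝ) r,
        ‖f r - f s‖^2 ≤ (B r * ENNReal.ofReal (r ^ κ / κ)).toReal := by
      intro s hs
      have h' : ENNReal.ofReal (‖f r - f s‖^2) ≤ B r * ENNReal.ofReal (r ^ κ / κ) :=
        (key1 s r hs.1 hs.2).trans
          (mul_le_mul_left (lintegral_mono_set (Ioc_subset_Ioc_left hs.1.le)) _)
      exact (ENNReal.ofReal_le_iff_le_toReal hne).1 h'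
    have htd : Tendsto (fun s => ‖f r - f s‖^2) (𝓝[>] (0:ℝ)) (𝓝 (‖f r - L‖^2)) :=
      ((tendsto_const_nhds.sub hL).norm.pow 2)
    exact le_of_tendsto htd (eventually_of_mem (Ioc_mem_nhdsGT_of_mem ⟨le_refl 0, hr⟩) hbound)
  -- Measurable representative
  have hUnion : Ioi (0:ℝ) = ⋃ n : ℕ, Ioc ((n+1:ℝ))⁻¹ (n+1) := by
    ext x
    simp only [mem_Ioi, mem_iUnion, mem_Ioc]
    constructor
    · intro hx
      obtain ⟨n, hn⟩ := exists_nat_gt (max x⁻¹ x)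
      have h1 : x⁻¹ < (n:ℝ) + 1 := lt_trans (lt_of_le_of_lt (le_max_left _ _) hn) (lt_add_one _)
      have h2 : x ≤ (n:ℝ) + 1 := le_trans (le_of_lt (lt_of_le_of_lt (le_max_right _ _) hn))
        (le_of_lt (lt_add_one _))
      refine ⟨n, ?_, h2⟩
      rw [← inv_inv x]
      exact inv_strictAnti₀ (inv_pos.2 hx) h1
    · rintro ⟨n, h1, h2⟩
      exact lt_trans (by positivity) h1
  have hameas : AEMeasurable (fun u => ENNReal.ofReal (‖f' u‖^2))
      (volume.restrict (Ioi (0:ℝ))) := by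
    rw [hUnion]
    rw [aemeasurable_iUnion_iff]
    intro n
    have hn1 : ((n:ℝ)+1)⁻¹ ∈ Ioi (0:ℝ) := by simp only [mem_Ioi]; positivity
    have hn2 : ((n:ℝ)+1) ∈ Ioi (0:ℝ) := by simp only [mem_Ioi]; positivity
    exact (((hloc _ hn1 _ hn2).1.aestronglyMeasurable.norm.aemeasurable.pow_const
      2)).ennreal_ofReal
  set φ : ℝ → ENNReal := hameas.mk _ with hφdef
  have hφm : Measurable φ := hameas.measurable_mk
  have hφeq : (fun u => ENNReal.ofReal (‖f' u‖^2)) =ᵐ[volume.restrict (Ioi (0:ℝ))] φ :=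
    hameas.ae_eq_mk
  have hg_eq : ∀ u : ℝ, g u = ENNReal.ofReal (‖f' u‖^2) * ENNReal.ofReal (u ^ (a + 1/2)) :=
    fun u => ENNReal.ofReal_mul (by positivity)
  have hw_eq : ∀ u : ℝ, w u = ENNReal.ofReal (‖f' u‖^2) * ENNReal.ofReal (u ^ (2*a)) :=
    fun u => ENNReal.ofReal_mul (by positivity)
  have hBG : ∀ r : ℝ, B r = ∫⁻ u in Ioc 0 r, φ u * ENNReal.ofReal (u ^ (a + 1/2)) := by
    intro r
    refine lintegral_congr_ae ?_
    filter_upwards [ae_restrict_of_ae_restrict_of_subset Ioc_subset_Ioi_self hφeq] with u hu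
    rw [hg_eq u, hu]
  have hWint : ∫⁻ u in Ioi (0:ℝ), w u = ∫⁻ u in Ioi (0:ℝ), φ u * ENNReal.ofReal (u ^ (2*a)) := by
    refine lintegral_congr_ae ?_
    filter_upwards [hφeq] with u hu
    rw [hw_eq u, hu]
  -- Tonelli
  set H : ℝ × ℝ → ENNReal := fun p =>
    ENNReal.ofReal (p.1 ^ (a - 3/2)) * (φ p.2 * ENNReal.ofReal (p.2 ^ (a + 1/2))) *
      {q : ℝ × ℝ | q.2 ≤ q.1}.indicator (fun _ => 1) p with hHdef
  have hHm : Measurable H := by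
    refine Measurable.mul (Measurable.mul ?_ ?_) ?_
    · exact (measurable_fst.pow_const _).ennreal_ofReal
    · exact (hφm.comp measurable_snd).mul ((measurable_snd.pow_const _).ennreal_ofReal)
    · exact measurable_const.indicator (measurableSet_le measurable_snd measurable_fst)
  have hswap := lintegral_lintegral_swap (μ := volume.restrict (Ioi (0:ℝ)))
    (ν := volume.restrict (Ioi (0:ℝ))) (f := fun r u => H (r, u)) hHm.aemeasurable
  have hinner : ∀ r : ℝ, (∫⁻ u in Ioi (0:ℝ), H (r, u))
      = ENNReal.ofReal (r ^ (a - 3/2)) * ∫⁻ u in Ioc 0 r, φ u * ENNReal.ofReal (u ^ (a + 1/2)) := by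
    intro r
    have hpt : ∀ u : ℝ, H (r, u) = ENNReal.ofReal (r ^ (a - 3/2)) *
        (Iic r).indicator (fun u => φ u * ENNReal.ofReal (u ^ (a + 1/2))) u := by
      intro u
      simp only [hHdef, Set.indicator_apply, mem_setOf_eq, mem_Iic]
      by_cases h : u ≤ r
      · simp only [h, if_true, mul_one]
      · simp only [h, if_false, mul_zero, zero_mul]
    simp_rw [hpt]
    rw [lintegral_const_mul' _ _ ENNReal.ofReal_ne_top,
      lintegral_indicator measurableSet_Iic,
      Measure.restrict_restrict measurableSet_Iic, inter_comm, Ioi_inter_Iic]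
  have hIci : ∀ u : ℝ, 0 < u →
      (∫⁻ r in Ici u, ENNReal.ofReal (r ^ (a - 3/2))) = ENNReal.ofReal (u ^ (a - 1/2) / κ) := by
    intro u hu
    rw [← restrict_Ioi_eq_restrict_Ici,
      ← ofReal_integral_eq_lintegral_ofReal (integrableOn_Ioi_rpow_of_lt (by linarith) hu)
        ((ae_restrict_iff' measurableSet_Ioi).2
          (ae_of_all _ fun x hx => Real.rpow_nonneg (le_of_lt (lt_trans hu hx)) _)),
      integral_Ioi_rpow_of_lt (by linarith) hu]
    congr 1
    rw [show a - 3/2 + 1 = a - 1/2 by ring, neg_div, ← div_neg, show -(a - 1/2) = κ by rw [hκdef]; ring]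
  have houter : ∀ u : ℝ, 0 < u → (∫⁻ r in Ioi (0:ℝ), H (r, u))
      = (φ u * ENNReal.ofReal (u ^ (2*a))) * ENNReal.ofReal (1 / κ) := by
    intro u hu
    have hpt : ∀ r : ℝ, H (r, u) = (φ u * ENNReal.ofReal (u ^ (a + 1/2))) *
        (Ici u).indicator (fun r => ENNReal.ofReal (r ^ (a - 3/2))) r := by
      intro r
      simp only [hHdef, Set.indicator_apply, mem_setOf_eq, mem_Ici]
      by_cases h : u ≤ r
      · simp only [h, if_true, mul_one]; ring
      · simp only [h, if_false, mul_zero, zero_mul]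
    have hIeq : Ici u ∩ Ioi (0:ℝ) = Ici u :=
      inter_eq_left.2 fun x hx => lt_of_lt_of_le hu hx
    simp_rw [hpt]
    rw [lintegral_const_mul'' _ (((measurable_id'.pow_const _).ennreal_ofReal).indicator
      measurableSet_Ici).aemeasurable,
      lintegral_indicator measurableSet_Ici,
      Measure.restrict_restrict measurableSet_Ici,
      hIeq, hIci u hu]
    have hsplit2 : ENNReal.ofReal (u ^ (a - 1/2) / κ)
        = ENNReal.ofReal (u ^ (a - 1/2)) * ENNReal.ofReal (1/κ) := by
      rw [div_eq_mul_one_div, ENNReal.ofReal_mul (Real.rpow_nonneg hu.le _)]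
    rw [hsplit2, ← mul_assoc,
      mul_assoc (φ u) (ENNReal.ofReal (u ^ (a + 1/2))) (ENNReal.ofReal (u ^ (a - 1/2))),
      ← ENNReal.ofReal_mul (Real.rpow_nonneg hu.le _), ← Real.rpow_add hu,
      show a + 1/2 + (a - 1/2) = 2*a by ring]
  have hswap' : ∫⁻ r in Ioi (0:ℝ), ENNReal.ofReal (r ^ (a - 3/2)) * B r
      = (∫⁻ u in Ioi (0:ℝ), w u) * ENNReal.ofReal (1 / κ) := by
    calc ∫⁻ r in Ioi (0:ℝ), ENNReal.ofReal (r ^ (a - 3/2)) * B r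
        = ∫⁻ r in Ioi (0:ℝ), ∫⁻ u in Ioi (0:ℝ), H (r, u) := by
          refine lintegral_congr fun r => ?_
          rw [hinner r, hBG r]
      _ = ∫⁻ u in Ioi (0:ℝ), ∫⁻ r in Ioi (0:ℝ), H (r, u) := hswap
      _ = ∫⁻ u in Ioi (0:ℝ), (φ u * ENNReal.ofReal (u ^ (2*a))) * ENNReal.ofReal (1 / κ) := by
          refine setLIntegral_congr_fun measurableSet_Ioi (fun u hu => ?_)
          exact houter u hu
      _ = (∫⁻ u in Ioi (0:ℝ), φ u * ENNReal.ofReal (u ^ (2*a))) * ENNReal.ofReal (1 / κ) :=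
          lintegral_mul_const' _ _ ENNReal.ofReal_ne_top
      _ = (∫⁻ u in Ioi (0:ℝ), w u) * ENNReal.ofReal (1 / κ) := by rw [hWint]
  -- Final assembly
  refine ⟨L, hL, ?_⟩
  have hLHS : ∫⁻ r in Ioi (0:ℝ), ENNReal.ofReal (‖f r - L‖^2 * r ^ (2*a - 2))
      ≤ ((∫⁻ u in Ioi (0:ℝ), w u) * ENNReal.ofReal (1 / κ)) * ENNReal.ofReal (1 / κ) := by
    calc ∫⁻ r in Ioi (0:ℝ), ENNReal.ofReal (‖f r - L‖^2 * r ^ (2*a - 2))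
        ≤ ∫⁻ r in Ioi (0:ℝ), (ENNReal.ofReal (r ^ (a - 3/2)) * B r) * ENNReal.ofReal (1 / κ) := by
          refine lintegral_mono_ae ((ae_restrict_iff' measurableSet_Ioi).2
            (ae_of_all _ fun r hr => ?_))
          have hr : (0:ℝ) < r := hr
          calc ENNReal.ofReal (‖f r - L‖^2 * r ^ (2*a - 2))
              = ENNReal.ofReal (‖f r - L‖^2) * ENNReal.ofReal (r ^ (2*a - 2)) :=
                ENNReal.ofReal_mul (by positivity)
            _ ≤ (B r * ENNReal.ofReal (r ^ κ / κ)) * ENNReal.ofReal (r ^ (2*a - 2)) :=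
                mul_le_mul_left (key4 r hr) _
            _ = (ENNReal.ofReal (r ^ (a - 3/2)) * B r) * ENNReal.ofReal (1 / κ) := by
                rw [div_eq_mul_one_div (r ^ κ) κ,
                  ENNReal.ofReal_mul (Real.rpow_nonneg hr.le _)]
                rw [show (B r * (ENNReal.ofReal (r ^ κ) * ENNReal.ofReal (1 / κ))) *
                    ENNReal.ofReal (r ^ (2*a - 2)) =
                    ((ENNReal.ofReal (r ^ κ) * ENNReal.ofReal (r ^ (2*a - 2))) * B r) *
                    ENNReal.ofReal (1 / κ) by ring]
                congr 2
                rw [← ENNReal.ofReal_mul (Real.rpow_nonneg hr.le _), ← Real.rpow_add hr]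
                congr 2
                rw [hκdef]; ring
      _ = (∫⁻ r in Ioi (0:ℝ), ENNReal.ofReal (r ^ (a - 3/2)) * B r) * ENNReal.ofReal (1 / κ) :=
          lintegral_mul_const' _ _ ENNReal.ofReal_ne_top
      _ = _ := by rw [hswap']
  have hfin : ENNReal.ofReal ((a - 1/2)^2) = ENNReal.ofReal (κ^2) := by
    congr 1; rw [hκdef]; ring
  calc ENNReal.ofReal ((a - 1/2)^2)
        * ∫⁻ r in Ioi (0:ℝ), ENNReal.ofReal (‖f r - L‖^2 * r ^ (2*a - 2))
      ≤ ENNReal.ofReal (κ^2) *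
          (((∫⁻ u in Ioi (0:ℝ), w u) * ENNReal.ofReal (1 / κ)) * ENNReal.ofReal (1 / κ)) := by
        rw [hfin]; exact mul_le_mul_right hLHS _
    _ = (∫⁻ u in Ioi (0:ℝ), w u) *
          (ENNReal.ofReal (κ^2) * ENNReal.ofReal (1 / κ) * ENNReal.ofReal (1 / κ)) := by ring
    _ = ∫⁻ u in Ioi (0:ℝ), w u := by
        rw [← ENNReal.ofReal_mul (by positivity), ← ENNReal.ofReal_mul (by positivity),
          show κ^2 * (1/κ) * (1/κ) = 1 by field_simp]
        simp
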